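/- Let p ∈ (2,4) and A, b, d > 0. If there exists a real number x > 0 such that A·x² + b·x⁴ ≤ d·x^p, then A·(A/d)^(2/(p−2)) ≤ (d·b^(−p/4))^(4/(4−p)). -/

import Mathlib

open Real

/-- For `p ∈ (2,4)` and `A, b, d > 0`, if there exists `x > 0` with
`A·x² + b·x⁴ ≤ d·x^p`, then `A·(A/d)^(2/(p−2)) ≤ (d·b^(−p/4))^(4/(4−p))`. -/
theorem stmt_17 (p A b d : ℝ) (hp2 : 2 < p) (hp4 : p < 4)
    (hA : 0 < A) (hb : 0 < b) (hd : 0 < d)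
    (h : ∃ x : ℝ, 0 < x ∧ A * x ^ 2 + b * x ^ 4 ≤ d * x ^ p) :
    A * (A / d) ^ (2 / (p - 2)) ≤ (d * b ^ (-p / 4)) ^ (4 / (4 - p)) := by
  obtain ⟨x, hx, hle⟩ := h
  have hx0 : (0:ℝ) ≤ x := hx.le
  have hp2' : 0 < p - 2 := by linarith
  have hp4' : 0 < 4 - p := by linarith
  have hxp : 0 < x ^ p := Real.rpow_pos_of_pos hx p
  have h1 : A * x ^ 2 ≤ d * x ^ p := by nlinarith [pow_pos hx 4]
  have h2 : b * x ^ 4 ≤ d * x ^ p := by nlinarith [pow_pos hx 2]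
  have hx2 : x ^ (2:ℝ) = x ^ 2 := by
    rw [← Real.rpow_natCast x 2]; norm_num
  have hx4 : x ^ (4:ℝ) = x ^ 4 := by
    rw [← Real.rpow_natCast x 4]; norm_num
  -- From h1: A/d ≤ x^(p-2)
  have key1 : A / d ≤ x ^ (p - 2) := by
    have hxp2 : x ^ p = x ^ (p - 2) * x ^ 2 := by
      rw [← hx2, ← Real.rpow_add hx]; ring_nf
    rw [hxp2] at h1
    have h1' : A ≤ d * x ^ (p - 2) :=
      (mul_le_mul_iff_of_pos_right (pow_pos hx 2)).mp (by linarith)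
    rw [div_le_iff₀ hd]; linarith [h1']
  have step1 : (A / d) ^ (2 / (p - 2)) ≤ x ^ 2 := by
    have hmono := Real.rpow_le_rpow (by positivity) key1
      (by positivity : (0:ℝ) ≤ 2 / (p - 2))
    rw [← Real.rpow_mul hx0] at hmono
    have heq : (p - 2) * (2 / (p - 2)) = 2 := by field_simp
    rwa [heq, hx2] at hmono
  -- From h2: x^(4-p) ≤ d/b
  have key2 : x ^ (4 - p) ≤ d / b := by
    have hxp4 : x ^ 4 = x ^ (4 - p) * x ^ p := by
      rw [← hx4, ← Real.rpow_add hx]; ring_nf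
    rw [hxp4] at h2
    have h2' : b * x ^ (4 - p) ≤ d :=
      (mul_le_mul_iff_of_pos_right hxp).mp (by linarith)
    rw [le_div_iff₀ hb]; linarith
  have step2 : x ^ p ≤ (d / b) ^ (p / (4 - p)) := by
    have hmono := Real.rpow_le_rpow (by positivity) key2
      (by positivity : (0:ℝ) ≤ p / (4 - p))
    rw [← Real.rpow_mul hx0] at hmono
    have heq : (4 - p) * (p / (4 - p)) = p := by field_simp
    rwa [heq] at hmono
  -- RHS identity
  have hrhs : (d * b ^ (-p / 4)) ^ (4 / (4 - p)) = d * (d / b) ^ (p / (4 - p)) := by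
    rw [Real.mul_rpow hd.le (Real.rpow_pos_of_pos hb _).le,
      ← Real.rpow_mul hb.le,
      Real.div_rpow hd.le hb.le]
    have h1 : (-p / 4) * (4 / (4 - p)) = -(p / (4 - p)) := by field_simp
    have h2 : d ^ (4 / (4 - p)) = d * d ^ (p / (4 - p)) := by
      rw [show (4:ℝ) / (4 - p) = 1 + p / (4 - p) by field_simp; ring,
        Real.rpow_add hd, Real.rpow_one]
    rw [h1, h2, Real.rpow_neg hb.le]
    field_simp
  calc A * (A / d) ^ (2 / (p - 2)) ≤ A * x ^ 2 := by
        exact mul_le_mul_of_nonneg_left step1 hA.le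
    _ ≤ d * x ^ p := h1
    _ ≤ d * (d / b) ^ (p / (4 - p)) := mul_le_mul_of_nonneg_left step2 hd.le
    _ = (d * b ^ (-p / 4)) ^ (4 / (4 - p)) := hrhs.symm
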